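/- Let d ≥ 2, l ≥ 2, β ∈ (0,1/d), and define the second-moment exponent Ψ(ρ,θ) = -ρ ln ρ - θ ln(θ/l) + (l-1)(1-2β+ρ)ln(1-2β+ρ) + θ ln(d-1) + 2(l-1)(β-ρ)ln(β-ρ) - 2l(β-ρ-θ/l)ln(β-ρ-θ/l) - (l/d)(1-2βd+ρd+(θ/l)d)·ln(1-2βd+ρd+(θ/l)d). Then the pair (ρ,θ) = (β², l(d-1)β²) satisfies both equations ∂Ψ/∂ρ = 0 and ∂Ψ/∂θ = 0. -/

import Mathlib

open Real

set_option maxHeartbeats 1000000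

lemma hda_mul_log' {u : ℝ → ℝ} {u' x : ℝ} (c : ℝ) (hu : HasDerivAt u u' x) (h : u x ≠ 0) :
    HasDerivAt (fun y => c * (u y * Real.log (u y))) (c * (u' * (Real.log (u x) + 1))) x := by
  have h2 := (Real.hasDerivAt_mul_log h).comp x hu
  have h3 := h2.const_mul c
  have e : c * (u' * (Real.log (u x) + 1)) = c * ((Real.log (u x) + 1) * u') := by ring
  rw [e]; exact h3


/-- The pair `(ρ,θ) = (β², l(d-1)β²)` is a critical point of the second-moment exponent
`Ψ(ρ,θ)`. -/
theorem Psi_critical_point (d l : ℕ) (hd : 2 ≤ d) (hl : 2 ≤ l)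
    (β : ℝ) (hβ : β ∈ Set.Ioo (0 : ℝ) (1 / d))
    (Ψ : ℝ → ℝ → ℝ)
    (hΨ : Ψ = fun ρ θ => -ρ * Real.log ρ - θ * Real.log (θ / l)
      + ((l : ℝ) - 1) * (1 - 2 * β + ρ) * Real.log (1 - 2 * β + ρ)
      + θ * Real.log ((d : ℝ) - 1)
      + 2 * ((l : ℝ) - 1) * (β - ρ) * Real.log (β - ρ)
      - 2 * l * (β - ρ - θ / l) * Real.log (β - ρ - θ / l)
      - ((l : ℝ) / d) * (1 - 2 * β * d + ρ * d + (θ / l) * d)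
          * Real.log (1 - 2 * β * d + ρ * d + (θ / l) * d)) :
    deriv (fun ρ => Ψ ρ ((l : ℝ) * ((d : ℝ) - 1) * β ^ 2)) (β ^ 2) = 0 ∧
    deriv (fun θ => Ψ (β ^ 2) θ) ((l : ℝ) * ((d : ℝ) - 1) * β ^ 2) = 0 := by
  obtain ⟨hβ0, hβd⟩ := hβ
  have hd2 : (2:ℝ) ≤ (d:ℝ) := by exact_mod_cast hd
  have hl2 : (2:ℝ) ≤ (l:ℝ) := by exact_mod_cast hl
  have hd0 : (0:ℝ) < d := by linarith
  have hl0 : (0:ℝ) < l := by linarith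
  have hdne : (d:ℝ) ≠ 0 := ne_of_gt hd0
  have hlne : (l:ℝ) ≠ 0 := ne_of_gt hl0
  have hdβ : (d:ℝ) * β < 1 := by
    have := (lt_div_iff₀ hd0).mp hβd; linarith [this]
  have hβ1 : β < 1 := by nlinarith
  have h1β : (0:ℝ) < 1 - β := by linarith
  have h1dβ : (0:ℝ) < 1 - d * β := by linarith
  set θ₀ : ℝ := (l : ℝ) * ((d : ℝ) - 1) * β ^ 2 with hθ₀
  have hθl : θ₀ / l = ((d:ℝ) - 1) * β ^ 2 := by
    rw [hθ₀]; field_simp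
  have p1 : (0:ℝ) < β ^ 2 := by positivity
  have p2 : (0:ℝ) < 1 - 2 * β + β ^ 2 := by nlinarith
  have p3 : (0:ℝ) < β - β ^ 2 := by nlinarith
  have p4 : (0:ℝ) < β - β ^ 2 - θ₀ / l := by rw [hθl]; nlinarith
  have p5 : (0:ℝ) < 1 - 2 * β * d + β ^ 2 * d + θ₀ / l * d := by
    rw [hθl]; nlinarith [mul_pos h1dβ h1dβ]
  have pθ : (0:ℝ) < θ₀ / l := by rw [hθl]; nlinarith
  constructor
  · -- ρ derivative
    have h1 : HasDerivAt (fun ρ : ℝ => (-1 : ℝ) * (ρ * Real.log ρ))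
        ((-1 : ℝ) * (1 * (Real.log (β ^ 2) + 1))) (β ^ 2) :=
      hda_mul_log' (-1) (hasDerivAt_id _) (ne_of_gt p1)
    have h2 : HasDerivAt (fun ρ : ℝ => ((l:ℝ) - 1) * ((1 - 2 * β + ρ) * Real.log (1 - 2 * β + ρ)))
        (((l:ℝ) - 1) * (1 * (Real.log (1 - 2 * β + β ^ 2) + 1))) (β ^ 2) :=
      hda_mul_log' _ ((hasDerivAt_id _).const_add (1 - 2 * β)) (ne_of_gt p2)
    have h3 : HasDerivAt (fun ρ : ℝ => (2 * ((l:ℝ) - 1)) * ((β - ρ) * Real.log (β - ρ)))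
        ((2 * ((l:ℝ) - 1)) * ((-1) * (Real.log (β - β ^ 2) + 1))) (β ^ 2) :=
      hda_mul_log' _ ((hasDerivAt_id _).const_sub β) (ne_of_gt p3)
    have h4 : HasDerivAt (fun ρ : ℝ => (-(2 * (l:ℝ))) * ((β - ρ - θ₀ / l) * Real.log (β - ρ - θ₀ / l)))
        ((-(2 * (l:ℝ))) * ((-1) * (Real.log (β - β ^ 2 - θ₀ / l) + 1))) (β ^ 2) :=
      hda_mul_log' _ (((hasDerivAt_id _).const_sub β).sub_const (θ₀ / l)) (ne_of_gt p4)
    have h5 : HasDerivAt (fun ρ : ℝ => (-((l:ℝ) / d)) *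
          ((1 - 2 * β * d + ρ * d + θ₀ / l * d) * Real.log (1 - 2 * β * d + ρ * d + θ₀ / l * d)))
        ((-((l:ℝ) / d)) * ((1 * d) * (Real.log (1 - 2 * β * d + β ^ 2 * d + θ₀ / l * d) + 1))) (β ^ 2) :=
      hda_mul_log' _ ((((hasDerivAt_id _).mul_const (d:ℝ)).const_add (1 - 2 * β * d)).add_const (θ₀ / l * d)) (ne_of_gt p5)
    have hG := ((((h1.add h2).add h3).add h4).add h5).add_const
        (θ₀ * Real.log ((d:ℝ) - 1) - θ₀ * Real.log (θ₀ / l))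
    have hF := hG.congr_of_eventuallyEq (Filter.Eventually.of_forall
      (fun y : ℝ => by simp only [hΨ]; ring :
        ∀ y : ℝ, (fun ρ => Ψ ρ θ₀) y =
          (fun ρ : ℝ => ((((-1 : ℝ) * (ρ * Real.log ρ)
            + ((l:ℝ) - 1) * ((1 - 2 * β + ρ) * Real.log (1 - 2 * β + ρ)))
            + (2 * ((l:ℝ) - 1)) * ((β - ρ) * Real.log (β - ρ)))
            + (-(2 * (l:ℝ))) * ((β - ρ - θ₀ / l) * Real.log (β - ρ - θ₀ / l)))
            + (-((l:ℝ) / d)) * ((1 - 2 * β * d + ρ * d + θ₀ / l * d) * Real.log (1 - 2 * β * d + ρ * d + θ₀ / l * d))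
            + (θ₀ * Real.log ((d:ℝ) - 1) - θ₀ * Real.log (θ₀ / l))) y))
    rw [hF.deriv]
    have e2 : (1 : ℝ) - 2 * β + β ^ 2 = (1 - β) ^ 2 := by ring
    have e3 : β - β ^ 2 = β * (1 - β) := by ring
    have e4 : β - β ^ 2 - θ₀ / l = β * (1 - d * β) := by rw [hθl]; ring
    have e5 : (1 : ℝ) - 2 * β * d + β ^ 2 * d + θ₀ / l * d = (1 - d * β) ^ 2 := by
      rw [hθl]; ring
    rw [e4, e5, e2, e3, Real.log_pow, Real.log_pow, Real.log_pow,
        Real.log_mul (ne_of_gt hβ0) (ne_of_gt h1β),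
        Real.log_mul (ne_of_gt hβ0) (ne_of_gt h1dβ)]
    field_simp
    ring
  · -- θ derivative
    have hθ0pos : (0:ℝ) < θ₀ := by rw [hθ₀]; nlinarith
    have q4 : (0:ℝ) < β - β ^ 2 - θ₀ / l := p4
    have hlog : HasDerivAt (fun θ : ℝ => Real.log (θ / l)) ((θ₀ / l)⁻¹ * (1 / l)) θ₀ := by
      have := (Real.hasDerivAt_log (ne_of_gt pθ)).comp θ₀ ((hasDerivAt_id θ₀).div_const (l:ℝ))
      exact this
    have h1 : HasDerivAt (fun θ : ℝ => -(θ * Real.log (θ / l)))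
        (-(1 * Real.log (θ₀ / l) + θ₀ * ((θ₀ / l)⁻¹ * (1 / l)))) θ₀ :=
      ((hasDerivAt_id θ₀).mul hlog).neg
    have h4 : HasDerivAt (fun θ : ℝ => (-(2 * (l:ℝ))) *
          ((β - β ^ 2 - θ / l) * Real.log (β - β ^ 2 - θ / l)))
        ((-(2 * (l:ℝ))) * ((-(1 / l)) * (Real.log (β - β ^ 2 - θ₀ / l) + 1))) θ₀ := by
      have hu : HasDerivAt (fun θ : ℝ => β - β ^ 2 - θ / l) (-(1 / l)) θ₀ := by
        simpa using ((hasDerivAt_id θ₀).div_const (l:ℝ)).const_sub (β - β ^ 2)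
      exact hda_mul_log' _ hu (ne_of_gt q4)
    have h5 : HasDerivAt (fun θ : ℝ => (-((l:ℝ) / d)) *
          ((1 - 2 * β * d + β ^ 2 * d + θ / l * d) * Real.log (1 - 2 * β * d + β ^ 2 * d + θ / l * d)))
        ((-((l:ℝ) / d)) * ((1 / (l:ℝ) * (d:ℝ)) * (Real.log (1 - 2 * β * d + β ^ 2 * d + θ₀ / l * d) + 1))) θ₀ := by
      have hu : HasDerivAt (fun θ : ℝ => 1 - 2 * β * d + β ^ 2 * d + θ / l * d)
          (1 / (l:ℝ) * (d:ℝ)) θ₀ :=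
        (((hasDerivAt_id θ₀).div_const (l:ℝ)).mul_const (d:ℝ)).const_add (1 - 2 * β * d + β ^ 2 * d)
      exact hda_mul_log' _ hu (ne_of_gt p5)
    have h2 : HasDerivAt (fun θ : ℝ => θ * Real.log ((d:ℝ) - 1)) (Real.log ((d:ℝ) - 1)) θ₀ := by
      simpa using (hasDerivAt_id θ₀).mul_const (Real.log ((d:ℝ) - 1))
    have hG := (((h1.add h2).add h4).add h5).add_const
      ((-(β ^ 2)) * Real.log (β ^ 2)
        + ((l:ℝ) - 1) * (1 - 2 * β + β ^ 2) * Real.log (1 - 2 * β + β ^ 2)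
        + 2 * ((l:ℝ) - 1) * (β - β ^ 2) * Real.log (β - β ^ 2))
    have hF := hG.congr_of_eventuallyEq (Filter.Eventually.of_forall
      (fun y : ℝ => by simp only [hΨ]; ring :
        ∀ y : ℝ, (fun θ => Ψ (β ^ 2) θ) y =
          (fun θ : ℝ => ((-(θ * Real.log (θ / l))
            + θ * Real.log ((d:ℝ) - 1))
            + (-(2 * (l:ℝ))) * ((β - β ^ 2 - θ / l) * Real.log (β - β ^ 2 - θ / l))
            + (-((l:ℝ) / d)) * ((1 - 2 * β * d + β ^ 2 * d + θ / l * d) * Real.log (1 - 2 * β * d + β ^ 2 * d + θ / l * d)))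
            + ((-(β ^ 2)) * Real.log (β ^ 2)
              + ((l:ℝ) - 1) * (1 - 2 * β + β ^ 2) * Real.log (1 - 2 * β + β ^ 2)
              + 2 * ((l:ℝ) - 1) * (β - β ^ 2) * Real.log (β - β ^ 2))) y))
    rw [hF.deriv]
    have e1 : θ₀ / l = ((d:ℝ) - 1) * β ^ 2 := hθl
    have e4 : β - β ^ 2 - θ₀ / l = β * (1 - d * β) := by rw [hθl]; ring
    have e5 : (1 : ℝ) - 2 * β * d + β ^ 2 * d + θ₀ / l * d = (1 - d * β) ^ 2 := by
      rw [hθl]; ring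
    have hd1ne : ((d:ℝ) - 1) ≠ 0 := by linarith
    rw [e4, e5, e1, Real.log_pow,
        Real.log_mul hd1ne (by positivity : (β:ℝ) ^ 2 ≠ 0), Real.log_pow,
        Real.log_mul (ne_of_gt hβ0) (ne_of_gt h1dβ), hθ₀]
    have hd1ne' : ((d:ℝ) - 1) ≠ 0 := hd1ne
    field_simp
    ring
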